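/- Let k ≥ 1 be an integer, λ > 0, β ∈ (0,1], and t ≥ 0. Define the probability mass function of the time-fractional Poisson process of order k by p_β^k(n,t) = ∑_{x ∈ Ω(k,n)} M_β^{(ζ(x))}(−kλt^β) · (λt^β)^{ζ(x)} / Π!(x), where M_β^{(j)} is the j-th derivative of the Mittag-Leffler function M_β. Then for every u ∈ [0,1], ∑_{n=0}^∞ u^n p_β^k(n,t) = M_β(−kλt^β(1 − (1/k)∑_{j=1}^k u^j)); that is, the probability generating function of the time-fractional Poisson process of order k equals the Mittag-Leffler function evaluated at −kλt^β(1 − g_k(u)). -/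

import Mathlib

open scoped BigOperators

/-- `Omega k n` is the (finite) set of tuples `(x₁,…,x_k)` of non-negative integers with
`x₁ + 2·x₂ + ⋯ + k·x_k = n`. -/
def Omega (k n : ℕ) : Finset (Fin k → ℕ) :=
  (Fintype.piFinset fun _ => Finset.range (n + 1)).filter
    (fun x => ∑ i, (i.1 + 1) * x i = n)

/-- `ζ(x) = x₁ + ⋯ + x_k`. -/
def zeta {k : ℕ} (x : Fin k → ℕ) : ℕ := ∑ i, x i

/-- `Π!(x) = x₁! ⋯ x_k!`. -/
def pifact {k : ℕ} (x : Fin k → ℕ) : ℕ := ∏ i, (x i).factorial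

/-- `c_k(n, y) = ∑_{x ∈ Ω(k,n)} y^{ζ(x)} / Π!(x)`. -/
noncomputable def ck (k n : ℕ) (y : ℝ) : ℝ :=
  ∑ x ∈ Omega k n, y ^ zeta x / (pifact x : ℝ)

/-- The Mittag-Leffler function `M_β(z) = ∑_{m=0}^∞ z^m / Γ(βm + 1)`. -/
noncomputable def mittagLeffler (β z : ℝ) : ℝ :=
  ∑' m : ℕ, z ^ m / Real.Gamma (β * m + 1)

/-- The pmf of the time-fractional Poisson process of order `k`:
`p_β^k(n,t) = ∑_{x ∈ Ω(k,n)} M_β^{(ζ(x))}(−kλt^β) (λt^β)^{ζ(x)} / Π!(x)`. -/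
noncomputable def pk (k : ℕ) (lam β : ℝ) (n : ℕ) (t : ℝ) : ℝ :=
  ∑ x ∈ Omega k n,
    iteratedDeriv (zeta x) (mittagLeffler β) (-(k * lam * t ^ β)) *
      (lam * t ^ β) ^ zeta x / (pifact x : ℝ)

/-! ### Analytic facts about the Mittag-Leffler function -/

/-- The power series of the Mittag-Leffler function. -/
noncomputable def mlSeries (β : ℝ) : FormalMultilinearSeries ℝ ℝ ℝ :=
  FormalMultilinearSeries.ofScalars ℝ (fun m => (Real.Gamma (β * m + 1))⁻¹)

lemma gamma_arg_pos {β : ℝ} (hβ : 0 < β) (m : ℕ) : 0 < Real.Gamma (β * m + 1) :=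
  Real.Gamma_pos_of_pos (by positivity)

lemma ml_summable_aux {β : ℝ} (hβ : 0 < β) (r : ℝ) (hr : 0 ≤ r) :
    Summable fun m : ℕ => r ^ m / Real.Gamma (β * m + 1) := by
  set A : ℝ := (r + 1) ^ (1 / β) with hA
  have hA1 : 1 ≤ A := Real.one_le_rpow (by linarith) (by positivity)
  have hA0 : 0 < A := by linarith
  have hgeo : Summable fun m : ℕ => (Real.exp A * A) * (r / (r + 1)) ^ m := by
    apply Summable.mul_left
    apply summable_geometric_of_lt_one (by positivity)
    rw [div_lt_one (by linarith)]; linarith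
  apply Summable.of_norm_bounded_eventually hgeo
  rw [Nat.cofinite_eq_atTop]
  filter_upwards [Filter.eventually_ge_atTop ⌈1 / β⌉₊] with m hm
  have hbm : 1 ≤ β * m := by
    have : (1:ℝ)/β ≤ m := le_trans (Nat.le_ceil _) (by exact_mod_cast hm)
    rw [div_le_iff₀ hβ] at this
    linarith [this]
  set n : ℕ := ⌊β * (m:ℝ)⌋₊ with hn
  have hfloor : (n : ℝ) ≤ β * m := Nat.floor_le (by positivity)
  have hfloor2 : β * m - 1 ≤ (n : ℝ) := by
    have := Nat.lt_floor_add_one (β * (m:ℝ)); rw [← hn] at this; linarith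
  have hg1 : ((n).factorial : ℝ) ≤ Real.Gamma (β * m + 1) := by
    rw [← Real.Gamma_nat_eq_factorial]
    have h2n : (2:ℝ) ≤ (n:ℝ) + 1 := by
      have : (1:ℕ) ≤ n := by
        rw [hn, Nat.le_floor_iff (by positivity)]; exact_mod_cast hbm
      have : (1:ℝ) ≤ (n:ℝ) := by exact_mod_cast this
      linarith
    exact Real.Gamma_strictMonoOn_Ici.monotoneOn h2n (by simp; linarith) (by linarith)
  have hpow2 : A ^ (β * (m:ℝ)) = (r+1) ^ m := by
    rw [hA, ← Real.rpow_natCast (r+1) m, ← Real.rpow_mul (by linarith)]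
    congr 1
    field_simp
  have hApow : (r + 1) ^ m / A ≤ A ^ n := by
    have h1 : A ^ (β * m - 1) ≤ (A : ℝ) ^ ((n:ℝ)) :=
      Real.rpow_le_rpow_of_exponent_le hA1 hfloor2
    rw [Real.rpow_natCast] at h1
    refine le_trans (le_of_eq ?_) h1
    rw [Real.rpow_sub hA0, Real.rpow_one, hpow2]
  have hnf0 : (0:ℝ) < (n.factorial : ℝ) := by exact_mod_cast n.factorial_pos
  have hkey : (1:ℝ) / (n.factorial : ℝ) ≤ Real.exp A / A ^ n := by
    rw [div_le_div_iff₀ hnf0 (by positivity), one_mul]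
    calc (A:ℝ) ^ n = A ^ n / (n.factorial:ℝ) * (n.factorial:ℝ) := by field_simp
    _ ≤ Real.exp A * (n.factorial:ℝ) := by
          gcongr
          exact Real.pow_div_factorial_le_exp A hA0.le n
  have hrm : (0:ℝ) ≤ r ^ m := by positivity
  rw [Real.norm_eq_abs, abs_of_nonneg (by positivity)]
  calc r ^ m / Real.Gamma (β * m + 1) ≤ r ^ m / (n.factorial : ℝ) := by
        gcongr
  _ = r ^ m * ((1:ℝ) / (n.factorial : ℝ)) := by ring
  _ ≤ r ^ m * (Real.exp A / A ^ n) := by gcongr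
  _ ≤ r ^ m * (Real.exp A * A / (r+1) ^ m) := by
        gcongr r ^ m * ?_
        rw [div_le_div_iff₀ (by positivity) (by positivity)]
        calc Real.exp A * (r+1)^m = Real.exp A * ((r+1)^m / A) * A := by field_simp
        _ ≤ Real.exp A * A ^ n * A := by gcongr
        _ = Real.exp A * A * A ^ n := by ring
  _ = Real.exp A * A * (r / (r + 1)) ^ m := by
        rw [div_pow]
        field_simp

lemma mlSeries_radius {β : ℝ} (hβ : 0 < β) : (mlSeries β).radius = ⊤ := by
  apply FormalMultilinearSeries.radius_eq_top_of_summable_norm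
  intro r
  simp only [mlSeries, FormalMultilinearSeries.ofScalars_norm]
  have := ml_summable_aux hβ r r.coe_nonneg
  refine this.congr fun m => ?_
  rw [Real.norm_eq_abs, abs_inv, abs_of_pos (gamma_arg_pos hβ m), inv_mul_eq_div]

lemma mittagLeffler_hasFPowerSeries {β : ℝ} (hβ : 0 < β) :
    HasFPowerSeriesOnBall (mittagLeffler β) (mlSeries β) 0 ⊤ := by
  have h := (mlSeries β).hasFPowerSeriesOnBall
    (by rw [mlSeries_radius hβ]; exact ENNReal.zero_lt_top)
  rw [mlSeries_radius hβ] at h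
  convert h using 1
  funext x
  rw [mittagLeffler, FormalMultilinearSeries.sum]
  refine tsum_congr fun m => ?_
  rw [mlSeries, FormalMultilinearSeries.ofScalars_apply_eq, smul_eq_mul, div_eq_inv_mul]

lemma iteratedFDeriv_diag (f : ℝ → ℝ) (m : ℕ) (z b : ℝ) :
    iteratedFDeriv ℝ m f z (fun _ => b) = b ^ m * iteratedDeriv m f z := by
  rw [iteratedDeriv_eq_iteratedFDeriv]
  have h1 : (fun _ : Fin m => b) = fun _ : Fin m => b • (1:ℝ) := by simp
  rw [h1, ContinuousMultilinearMap.map_smul_univ]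
  simp [Finset.prod_const]

lemma ml_changeOrigin {β : ℝ} (hβ : 0 < β) (z : ℝ) :
    HasFPowerSeriesOnBall (mittagLeffler β) ((mlSeries β).changeOrigin z) z ⊤ := by
  have h := (mittagLeffler_hasFPowerSeries hβ).changeOrigin (y := z)
    (by simp [ENNReal.coe_lt_top])
  rwa [zero_add, ENNReal.top_sub_coe] at h

lemma ml_taylor {β : ℝ} (hβ : 0 < β) (z b : ℝ) :
    HasSum (fun m : ℕ => iteratedDeriv m (mittagLeffler β) z * b ^ m / m.factorial)
      (mittagLeffler β (z + b)) := by
  have h3 := (ml_changeOrigin hβ z).hasSum_iteratedFDeriv (y := b)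
    (by simp [EMetric.mem_ball, edist_lt_top])
  refine h3.congr_fun fun m => ?_
  rw [iteratedFDeriv_diag, smul_eq_mul]
  field_simp

lemma ml_deriv_summable {β : ℝ} (hβ : 0 < β) (z : ℝ) {b : ℝ} (hb : 0 ≤ b) :
    Summable fun m : ℕ => |iteratedDeriv m (mittagLeffler β) z| * b ^ m / m.factorial := by
  have h := ml_changeOrigin hβ z
  have hrad : ((mlSeries β).changeOrigin z).radius = ⊤ := top_le_iff.mp h.r_le
  have hs := ((mlSeries β).changeOrigin z).summable_norm_mul_pow (r := b.toNNReal)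
    (by rw [hrad]; exact ENNReal.coe_lt_top)
  rw [Real.coe_toNNReal b hb] at hs
  refine Summable.of_nonneg_of_le (fun m => by positivity) (fun m => ?_) hs
  have hd : iteratedDeriv m (mittagLeffler β) z
      = m.factorial • ((mlSeries β).changeOrigin z) m (fun _ => 1) := by
    rw [h.factorial_smul 1 m, iteratedDeriv_eq_iteratedFDeriv]
  rw [hd]
  have hle : |((mlSeries β).changeOrigin z) m (fun _ => (1:ℝ))| ≤
      ‖((mlSeries β).changeOrigin z) m‖ := by
    have := (((mlSeries β).changeOrigin z) m).le_opNorm (fun _ => (1:ℝ))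
    simpa using this
  have hfpos : (0:ℝ) < m.factorial := by exact_mod_cast m.factorial_pos
  rw [nsmul_eq_mul, abs_mul, Nat.abs_cast]
  rw [div_le_iff₀ hfpos]
  calc (m.factorial:ℝ) * |((mlSeries β).changeOrigin z) m (fun _ => 1)| * b ^ m
      ≤ (m.factorial:ℝ) * ‖((mlSeries β).changeOrigin z) m‖ * b ^ m := by gcongr
  _ = ‖((mlSeries β).changeOrigin z) m‖ * b ^ m * (m.factorial:ℝ) := by ring

/-! ### Combinatorial facts -/

lemma mem_Omega_iff {k n : ℕ} {x : Fin k → ℕ} :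
    x ∈ Omega k n ↔ ∑ i, (i.1 + 1) * x i = n := by
  constructor
  · exact fun h => (Finset.mem_filter.1 h).2
  · intro h
    refine Finset.mem_filter.2 ⟨Fintype.mem_piFinset.2 fun i => ?_, h⟩
    rw [Finset.mem_range, Nat.lt_succ_iff, ← h]
    calc x i ≤ (i.1 + 1) * x i := Nat.le_mul_of_pos_left _ (Nat.succ_pos _)
    _ ≤ _ := Finset.single_le_sum (f := fun i => (i.1 + 1) * x i)
        (fun _ _ => Nat.zero_le _) (Finset.mem_univ i)

/-- The set of tuples with coordinate sum `m`. -/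
def pad (k m : ℕ) : Finset (Fin k → ℕ) := Finset.piAntidiag Finset.univ m

lemma mem_pad_iff {k m : ℕ} {x : Fin k → ℕ} :
    x ∈ pad k m ↔ zeta x = m := by
  rw [pad, Finset.mem_piAntidiag, zeta]
  simp

/-- Equivalence between tuples and the sigma type of fibers of a "level" function. -/
def fiberEquiv {k : ℕ} (ν : (Fin k → ℕ) → ℕ) (B : ℕ → Finset (Fin k → ℕ))
    (h : ∀ (x : Fin k → ℕ) (n : ℕ), x ∈ B n ↔ ν x = n) :
    (Σ n : ℕ, (B n : Finset (Fin k → ℕ))) ≃ (Fin k → ℕ) where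
  toFun p := p.2.1
  invFun x := ⟨ν x, ⟨x, (h x (ν x)).2 rfl⟩⟩
  left_inv := by rintro ⟨n, x, hx⟩; obtain rfl := (h x n).1 hx; rfl
  right_inv x := rfl

lemma tsum_fiber {k : ℕ} (ν : (Fin k → ℕ) → ℕ) (B : ℕ → Finset (Fin k → ℕ))
    (h : ∀ (x : Fin k → ℕ) (n : ℕ), x ∈ B n ↔ ν x = n)
    (f : (Fin k → ℕ) → ℝ) (hf : Summable f) :
    ∑' x, f x = ∑' n : ℕ, ∑ x ∈ B n, f x := by
  rw [← (fiberEquiv ν B h).tsum_eq f]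
  have hs : Summable (f ∘ (fiberEquiv ν B h)) := ((fiberEquiv ν B h).summable_iff).2 hf
  have := hs.tsum_sigma
  rw [show (fun c : (n : ℕ) × {x // x ∈ B n} => f ((fiberEquiv ν B h) c))
      = f ∘ (fiberEquiv ν B h) from rfl, this]
  exact tsum_congr fun n => Finset.tsum_subtype (B n) f

lemma multinomial_real {k m : ℕ} (a : Fin k → ℝ) :
    ∑ x ∈ pad k m, (∏ i, a i ^ x i / ((x i).factorial : ℝ))
      = (∑ i, a i) ^ m / m.factorial := by
  rw [pad, Finset.sum_pow_eq_sum_piAntidiag, Finset.sum_div]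
  refine Finset.sum_congr rfl fun x hx => ?_
  rw [Finset.mem_piAntidiag] at hx
  have hspec := Nat.multinomial_spec Finset.univ x
  rw [hx.1] at hspec
  have hm : (m.factorial : ℝ)
      = (∏ i, ((x i).factorial : ℝ)) * (Nat.multinomial Finset.univ x : ℝ) := by
    exact_mod_cast hspec.symm
  rw [Finset.prod_div_distrib, hm]
  have h1 : (0:ℝ) < ∏ i, ((x i).factorial : ℝ) := by
    apply Finset.prod_pos; intro i _; exact_mod_cast (x i).factorial_pos
  have h2 : (0:ℝ) < (Nat.multinomial Finset.univ x : ℝ) := by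
    exact_mod_cast Nat.multinomial_pos _ _
  field_simp

lemma prod_aux {k : ℕ} (w u : ℝ) (x : Fin k → ℕ) :
    ∏ i, (w * u ^ (i.1 + 1)) ^ x i / ((x i).factorial : ℝ)
      = w ^ zeta x * u ^ (∑ i, (i.1 + 1) * x i) / (pifact x : ℝ) := by
  rw [Finset.prod_div_distrib]
  congr 1
  · rw [zeta]
    calc ∏ i, (w * u ^ (i.1 + 1)) ^ x i
        = ∏ i, (w ^ x i * u ^ ((i.1 + 1) * x i)) := by
          refine Finset.prod_congr rfl fun i _ => ?_
          rw [mul_pow, ← pow_mul]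
    _ = (∏ i, w ^ x i) * ∏ i, u ^ ((i.1 + 1) * x i) := Finset.prod_mul_distrib
    _ = _ := by rw [Finset.prod_pow_eq_pow_sum, Finset.prod_pow_eq_pow_sum]
  · rw [pifact]; push_cast; rfl

/-- The summand function over all tuples. -/
noncomputable def Fml (k : ℕ) (β w u z : ℝ) (x : Fin k → ℕ) : ℝ :=
  iteratedDeriv (zeta x) (mittagLeffler β) z *
    ∏ i, (w * u ^ (i.1 + 1)) ^ x i / ((x i).factorial : ℝ)

lemma abs_Fml (k : ℕ) (β w u z : ℝ) (hw : 0 ≤ w) (hu : 0 ≤ u) (x : Fin k → ℕ) :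
    |Fml k β w u z x| = |iteratedDeriv (zeta x) (mittagLeffler β) z| *
      ∏ i, (w * u ^ (i.1 + 1)) ^ x i / ((x i).factorial : ℝ) := by
  rw [Fml, abs_mul]
  congr 1
  exact abs_of_nonneg (Finset.prod_nonneg fun i _ => by positivity)

lemma main_aux (k : ℕ) (β w u z : ℝ) (hβ0 : 0 < β) (hw0 : 0 ≤ w) (hu0 : 0 ≤ u) :
    ∑' n : ℕ, u ^ n * (∑ x ∈ Omega k n,
        iteratedDeriv (zeta x) (mittagLeffler β) z * w ^ zeta x / (pifact x : ℝ))
      = mittagLeffler β (z + ∑ i : Fin k, w * u ^ (i.1 + 1)) := by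
  classical
  set b : ℝ := ∑ i : Fin k, w * u ^ (i.1 + 1) with hb
  have hb0 : 0 ≤ b := Finset.sum_nonneg fun i _ => by positivity
  have hDsum := ml_deriv_summable hβ0 z hb0
  have hfibF : ∀ m : ℕ, ∑ x ∈ pad k m, Fml k β w u z x
      = iteratedDeriv m (mittagLeffler β) z * (b ^ m / m.factorial) := by
    intro m
    calc ∑ x ∈ pad k m, Fml k β w u z x
        = ∑ x ∈ pad k m, iteratedDeriv m (mittagLeffler β) z *
            ∏ i, (w * u ^ (i.1 + 1)) ^ x i / ((x i).factorial : ℝ) :=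
          Finset.sum_congr rfl fun x hx => by rw [Fml, mem_pad_iff.1 hx]
    _ = iteratedDeriv m (mittagLeffler β) z *
          ∑ x ∈ pad k m,
            ∏ i, (w * u ^ (i.1 + 1)) ^ x i / ((x i).factorial : ℝ) := by
          rw [Finset.mul_sum]
    _ = _ := by rw [multinomial_real (fun i : Fin k => w * u ^ (i.1 + 1))]
  have hfibAbs : ∀ m : ℕ, ∑ x ∈ pad k m, |Fml k β w u z x|
      = |iteratedDeriv m (mittagLeffler β) z| * (b ^ m / m.factorial) := by
    intro m
    calc ∑ x ∈ pad k m, |Fml k β w u z x|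
        = ∑ x ∈ pad k m, |iteratedDeriv m (mittagLeffler β) z| *
            ∏ i, (w * u ^ (i.1 + 1)) ^ x i / ((x i).factorial : ℝ) :=
          Finset.sum_congr rfl fun x hx => by
            rw [abs_Fml k β w u z hw0 hu0, mem_pad_iff.1 hx]
    _ = |iteratedDeriv m (mittagLeffler β) z| *
          ∑ x ∈ pad k m,
            ∏ i, (w * u ^ (i.1 + 1)) ^ x i / ((x i).factorial : ℝ) := by
          rw [Finset.mul_sum]
    _ = _ := by rw [multinomial_real (fun i : Fin k => w * u ^ (i.1 + 1))]
  have hsum_abs : Summable fun x : Fin k → ℕ => |Fml k β w u z x| := by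
    rw [← Equiv.summable_iff (fiberEquiv zeta (pad k) (fun x n => mem_pad_iff))]
    refine (summable_sigma_of_nonneg fun p => abs_nonneg _).2 ⟨fun m => ?_, ?_⟩
    · exact Summable.of_finite
    · refine (hDsum.congr fun m => ?_)
      calc |iteratedDeriv m (mittagLeffler β) z| * b ^ m / m.factorial
          = ∑ x ∈ pad k m, |Fml k β w u z x| := by rw [hfibAbs m, mul_div_assoc]
      _ = ∑' (y : {x // x ∈ pad k m}), |Fml k β w u z y.1| :=
          (Finset.tsum_subtype (pad k m) (fun x => |Fml k β w u z x|)).symm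
      _ = _ := rfl
  have hsumF : Summable (Fml k β w u z) := hsum_abs.of_abs
  calc ∑' n : ℕ, u ^ n * (∑ x ∈ Omega k n,
        iteratedDeriv (zeta x) (mittagLeffler β) z * w ^ zeta x / (pifact x : ℝ))
      = ∑' n : ℕ, ∑ x ∈ Omega k n, Fml k β w u z x := by
        refine tsum_congr fun n => ?_
        rw [Finset.mul_sum]
        refine Finset.sum_congr rfl fun x hx => ?_
        rw [Fml, prod_aux, mem_Omega_iff.1 hx]
        ring
  _ = ∑' x : Fin k → ℕ, Fml k β w u z x :=
        (tsum_fiber (fun x => ∑ i, (i.1 + 1) * x i) (Omega k)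
          (fun x n => mem_Omega_iff) _ hsumF).symm
  _ = ∑' m : ℕ, ∑ x ∈ pad k m, Fml k β w u z x :=
        tsum_fiber zeta (pad k) (fun x n => mem_pad_iff) _ hsumF
  _ = ∑' m : ℕ, iteratedDeriv m (mittagLeffler β) z * (b ^ m / m.factorial) :=
        tsum_congr hfibF
  _ = mittagLeffler β (z + b) := by
        rw [← (ml_taylor hβ0 z b).tsum_eq]
        exact tsum_congr fun m => (mul_div_assoc _ _ _).symm

/-- The probability generating function of the time-fractional Poisson process of order `k`:
`∑_{n=0}^∞ uⁿ p_β^k(n,t) = M_β(−kλt^β(1 − (1/k)∑_{j=1}^k u^j))` for `u ∈ [0,1]`. -/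
theorem pgf_time_fractional_poisson_of_order_k
    (k : ℕ) (hk : 1 ≤ k) (lam β t : ℝ) (hlam : 0 < lam) (hβ : β ∈ Set.Ioc (0 : ℝ) 1)
    (ht : 0 ≤ t) (u : ℝ) (hu : u ∈ Set.Icc (0 : ℝ) 1) :
    ∑' n : ℕ, u ^ n * pk k lam β n t =
      mittagLeffler β
        (-(k * lam * t ^ β * (1 - (1 / k) * ∑ j ∈ Finset.range k, u ^ (j + 1)))) := by
  obtain ⟨hβ0, hβ1⟩ := hβ
  obtain ⟨hu0, hu1⟩ := hu
  have hk0 : (k:ℝ) ≠ 0 := Nat.cast_ne_zero.2 (by omega)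
  have hw0 : 0 ≤ lam * t ^ β := mul_nonneg hlam.le (Real.rpow_nonneg ht β)
  have h := main_aux k β (lam * t ^ β) u (-(k * lam * t ^ β)) hβ0 hw0 hu0
  rw [show (fun n : ℕ => u ^ n * pk k lam β n t)
      = fun n : ℕ => u ^ n * (∑ x ∈ Omega k n,
        iteratedDeriv (zeta x) (mittagLeffler β) (-(k * lam * t ^ β)) *
          (lam * t ^ β) ^ zeta x / (pifact x : ℝ)) from rfl, h]
  congr 1
  rw [show (∑ i : Fin k, lam * t ^ β * u ^ (i.1 + 1))
      = ∑ j ∈ Finset.range k, lam * t ^ β * u ^ (j + 1) from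
    Fin.sum_univ_eq_sum_range (fun j => lam * t ^ β * u ^ (j + 1)) k,
    ← Finset.mul_sum]
  field_simp
  ring
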